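/- Let x₁, ..., x_M be pairwise distinct points in ℝⁿ and α > 0. Then the M×M matrix K with entries K_{jk} = exp(-α ‖x_j - x_k‖²) is symmetric positive definite. -/

import Mathlib

open Finset
open scoped Matrix

lemma rbf_aux_quad_expand {M N : ℕ} (b : Fin M → ℝ) (X : Fin M → Fin N → ℝ) (m : ℕ) :
    ∑ j, ∑ k, b j * b k * (∑ i, X j i * X k i) ^ m
      = ∑ w : Fin m → Fin N, (∑ j, b j * ∏ l, X j (w l)) ^ 2 := by
  have h1 : ∀ j k : Fin M, (∑ i, X j i * X k i) ^ m
      = ∑ w : Fin m → Fin N, ∏ l, (X j (w l) * X k (w l)) := fun j k =>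
    Fintype.sum_pow (fun i => X j i * X k i) m
  calc ∑ j, ∑ k, b j * b k * (∑ i, X j i * X k i) ^ m
      = ∑ j, ∑ k, ∑ w : Fin m → Fin N,
          (b j * ∏ l, X j (w l)) * (b k * ∏ l, X k (w l)) := by
        refine Finset.sum_congr rfl fun j _ => Finset.sum_congr rfl fun k _ => ?_
        rw [h1, Finset.mul_sum]
        refine Finset.sum_congr rfl fun w _ => ?_
        rw [Finset.prod_mul_distrib]; ring
    _ = ∑ j, ∑ w : Fin m → Fin N, ∑ k,
          (b j * ∏ l, X j (w l)) * (b k * ∏ l, X k (w l)) :=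
        Finset.sum_congr rfl fun j _ => Finset.sum_comm
    _ = ∑ w : Fin m → Fin N, ∑ j, ∑ k,
          (b j * ∏ l, X j (w l)) * (b k * ∏ l, X k (w l)) := Finset.sum_comm
    _ = ∑ w : Fin m → Fin N, (∑ j, b j * ∏ l, X j (w l)) ^ 2 := by
        refine Finset.sum_congr rfl fun w _ => ?_
        rw [sq, Finset.sum_mul_sum]

lemma rbf_aux_lin_expand {M N m : ℕ} (b : Fin M → ℝ) (X : Fin M → Fin N → ℝ)
    (h : ∀ w : Fin m → Fin N, ∑ j, b j * ∏ l, X j (w l) = 0)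
    (u : Fin m → Fin N → ℝ) :
    ∑ j, b j * ∏ l, (∑ i, u l i * X j i) = 0 := by
  have h1 : ∀ j, (∏ l, ∑ i, u l i * X j i)
      = ∑ w : Fin m → Fin N, ∏ l, (u l (w l) * X j (w l)) := fun j =>
    Fintype.prod_sum (fun l i => u l i * X j i)
  calc ∑ j, b j * ∏ l, (∑ i, u l i * X j i)
      = ∑ j, ∑ w : Fin m → Fin N,
          (∏ l, u l (w l)) * (b j * ∏ l, X j (w l)) := by
        refine Finset.sum_congr rfl fun j _ => ?_
        rw [h1, Finset.mul_sum]
        refine Finset.sum_congr rfl fun w _ => ?_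
        rw [Finset.prod_mul_distrib]; ring
    _ = ∑ w : Fin m → Fin N, (∏ l, u l (w l)) * ∑ j, b j * ∏ l, X j (w l) := by
        rw [Finset.sum_comm]
        exact Finset.sum_congr rfl fun w _ => (Finset.mul_sum _ _ _).symm
    _ = 0 := Finset.sum_eq_zero fun w _ => by rw [h w, mul_zero]

lemma rbf_aux_snoc_dot {n : ℕ} (v w : Fin n → ℝ) (a c : ℝ) :
    ∑ i : Fin (n+1), (Fin.snoc v a : Fin (n+1) → ℝ) i * (Fin.snoc w c : Fin (n+1) → ℝ) i
      = (∑ i, v i * w i) + a * c := by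
  rw [Fin.sum_univ_castSucc]
  simp

theorem rbf_kernel_matrix_posDef (n M : ℕ) (x : Fin M → EuclideanSpace ℝ (Fin n))
    (hx : Function.Injective x) (α : ℝ) (hα : 0 < α) :
    (Matrix.of fun j k : Fin M => Real.exp (-α * ‖x j - x k‖ ^ 2)).PosDef := by
  classical
  rw [Matrix.posDef_iff_dotProduct_mulVec]
  constructor
  · show _ = _
    ext j k
    simp [Matrix.conjTranspose_apply, norm_sub_rev]
  intro c hc
  set X : Fin M → Fin (n+1) → ℝ := fun j => Fin.snoc (fun i => x j i) 1 with hX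
  set b : Fin M → ℝ := fun j => c j * Real.exp (-α * ‖x j‖ ^ 2 - α) with hb
  have hinner : ∀ j k : Fin M,
      ∑ i, X j i * X k i = (inner ℝ (x j) (x k) : ℝ) + 1 := by
    intro j k
    rw [hX]
    rw [rbf_aux_snoc_dot]
    simp [PiLp.inner_apply, RCLike.inner_apply, conj_trivial]
    exact Finset.sum_congr rfl fun _ _ => mul_comm _ _
  have hentry : ∀ j k : Fin M, c j * (Real.exp (-α * ‖x j - x k‖ ^ 2) * c k)
      = b j * b k * Real.exp (2 * α * ∑ i, X j i * X k i) := by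
    intro j k
    rw [hinner j k, hb]
    have hnorm : -α * ‖x j - x k‖ ^ 2
        = (-α * ‖x j‖ ^ 2 - α) + ((-α * ‖x k‖ ^ 2 - α)
            + 2 * α * ((inner ℝ (x j) (x k) : ℝ) + 1)) := by
      rw [norm_sub_sq_real]; ring
    rw [hnorm, Real.exp_add, Real.exp_add]; ring
  have hquad : dotProduct (star c)
        ((Matrix.of fun j k : Fin M => Real.exp (-α * ‖x j - x k‖ ^ 2)) *ᵥ c)
      = ∑ j, ∑ k, b j * b k * Real.exp (2 * α * ∑ i, X j i * X k i) := by
    simp only [dotProduct, Matrix.mulVec, Pi.star_apply, star_trivial,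
      Matrix.of_apply]
    refine Finset.sum_congr rfl fun j _ => ?_
    rw [Finset.mul_sum]
    exact Finset.sum_congr rfl fun k _ => hentry j k
  have hexp : ∀ j k : Fin M,
      HasSum (fun m : ℕ => b j * b k * ((2 * α * ∑ i, X j i * X k i) ^ m / m.factorial))
        (b j * b k * Real.exp (2 * α * ∑ i, X j i * X k i)) := by
    intro j k
    have h := NormedSpace.expSeries_div_hasSum_exp (2 * α * ∑ i, X j i * X k i)
    rw [← Real.exp_eq_exp_ℝ] at h
    exact h.mul_left _
  have hsum : HasSum
      (fun m : ℕ => ∑ j, ∑ k, b j * b k * ((2 * α * ∑ i, X j i * X k i) ^ m / m.factorial))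
      (∑ j, ∑ k, b j * b k * Real.exp (2 * α * ∑ i, X j i * X k i)) :=
    hasSum_sum fun j _ => hasSum_sum fun k _ => hexp j k
  have hgm : ∀ m : ℕ,
      ∑ j, ∑ k, b j * b k * ((2 * α * ∑ i, X j i * X k i) ^ m / m.factorial)
        = (2 * α) ^ m / m.factorial
            * ∑ w : Fin m → Fin (n+1), (∑ j, b j * ∏ l, X j (w l)) ^ 2 := by
    intro m
    rw [← rbf_aux_quad_expand b X m, Finset.mul_sum]
    refine Finset.sum_congr rfl fun j _ => ?_
    rw [Finset.mul_sum]
    refine Finset.sum_congr rfl fun k _ => ?_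
    rw [mul_pow]
    ring
  simp only [hgm] at hsum
  have hgnonneg : ∀ m : ℕ, 0 ≤ (2 * α) ^ m / m.factorial
      * ∑ w : Fin m → Fin (n+1), (∑ j, b j * ∏ l, X j (w l)) ^ 2 := by
    intro m
    have h1 : (0:ℝ) ≤ (2 * α) ^ m / m.factorial := by positivity
    exact mul_nonneg h1 (Finset.sum_nonneg fun w _ => sq_nonneg _)
  have hE0 : 0 ≤ ∑ j, ∑ k, b j * b k * Real.exp (2 * α * ∑ i, X j i * X k i) :=
    hsum.nonneg hgnonneg
  rw [hquad]
  rcases eq_or_lt_of_le hE0 with heq | hlt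
  · exfalso
    have hzero := (hasSum_zero_iff_of_nonneg hgnonneg).mp (heq ▸ hsum)
    have hT : ∀ (m : ℕ) (w : Fin m → Fin (n+1)), ∑ j, b j * ∏ l, X j (w l) = 0 := by
      intro m w
      have h1 := congrFun hzero m
      have hpos : (0:ℝ) < (2 * α) ^ m / m.factorial := by positivity
      have h2 : ∑ w' : Fin m → Fin (n+1), (∑ j, b j * ∏ l, X j (w' l)) ^ 2 = 0 :=
        (mul_eq_zero.mp h1).resolve_left hpos.ne'
      have h3 := (Finset.sum_eq_zero_iff_of_nonneg
        (fun w' _ => sq_nonneg _)).mp h2 w (Finset.mem_univ w)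
      exact pow_eq_zero_iff (two_ne_zero) |>.mp h3
    have hbzero : ∀ k, b k = 0 := by
      intro k
      set u : Fin M → Fin (n+1) → ℝ := fun l =>
        if l = k then Fin.snoc (fun _ => (0:ℝ)) 1
        else Fin.snoc (fun i => x k i - x l i)
          (-(∑ i, x l i * (x k i - x l i))) with hu
      have hlin := rbf_aux_lin_expand b X (hT M) u
      have hfac : ∀ j l : Fin M, (∑ i, u l i * X j i)
          = if l = k then 1 else ∑ i, (x j i - x l i) * (x k i - x l i) := by
        intro j l
        by_cases hlk : l = k
        · simp only [hu, hX, if_pos hlk]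
          rw [rbf_aux_snoc_dot]
          simp
        · simp only [hu, hX, if_neg hlk]
          rw [rbf_aux_snoc_dot, mul_one, ← sub_eq_add_neg, ← Finset.sum_sub_distrib]
          exact Finset.sum_congr rfl fun i _ => by ring
      simp only [hfac] at hlin
      rw [Finset.sum_eq_single k] at hlin
      · have hprodpos : 0 < ∏ l : Fin M,
            (if l = k then 1 else ∑ i, (x k i - x l i) * (x k i - x l i)) := by
          refine Finset.prod_pos fun l _ => ?_
          by_cases hlk : l = k
          · simp [hlk]
          · rw [if_neg hlk]
            have hne : x k ≠ x l := fun h => hlk (hx h).symm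
            have hex : ∃ i, x k i ≠ x l i := by
              by_contra hcon
              push_neg at hcon
              exact hne (PiLp.ext hcon)
            obtain ⟨i, hi⟩ := hex
            refine Finset.sum_pos' (fun i' _ => mul_self_nonneg _)
              ⟨i, Finset.mem_univ i, ?_⟩
            exact mul_self_pos.mpr (sub_ne_zero_of_ne hi)
        exact (mul_eq_zero.mp hlin).resolve_right hprodpos.ne'
      · intro j _ hjk
        have : (∏ l : Fin M,
            (if l = k then 1 else ∑ i, (x j i - x l i) * (x k i - x l i))) = 0 := by
          refine Finset.prod_eq_zero (Finset.mem_univ j) ?_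
          rw [if_neg hjk]
          exact Finset.sum_eq_zero fun i _ => by ring
        rw [this, mul_zero]
      · intro hk
        exact absurd (Finset.mem_univ k) hk
    apply hc
    funext k
    have h1 := hbzero k
    rw [hb] at h1
    have h2 := (mul_eq_zero.mp h1).resolve_right (Real.exp_ne_zero _)
    exact h2
  · exact hlt
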